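/- Let N ≥ 2, K > 1, C₃ > 0, C₁ > 0 be reals and for each k with 0 ≤ k ≤ ⌊N/2⌋ suppose real numbers T_A^{(k)} and T^{(k)} ≥ 0 satisfy |T_A^{(k)}| ≤ 4C₃e^{C₁}K^N N / (2k)! · D and 0 ≤ T^{(k)} ≤ 2e^{C₁}K^N / (2k)! · D and T^{(0)} ≥ D for some D > 0. Then for any 0 ≤ k₀ < ⌊N/2⌋, |Σ_{k=0}^{⌊N/2⌋} T_A^{(k)} / Σ_{k=0}^{⌊N/2⌋} T^{(k)} − Σ_{k=0}^{k₀} T_A^{(k)} / Σ_{k=0}^{k₀} T^{(k)}| ≤ 16 C₃ e^{2C₁} K^{2N} N (Σ_{k=0}^{k₀} 1/(2k)!) (Σ_{k=k₀+1}^{⌊N/2⌋} 1/(2k)!). -/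

import Mathlib

open Finset

theorem truncation_error_bound (N : ℕ) (hN : 2 ≤ N)
    (K C₃ C₁ D : ℝ) (hK : 1 < K) (hC₃ : 0 < C₃) (hC₁ : 0 < C₁) (hD : 0 < D)
    (TA T : ℕ → ℝ)
    (hTA : ∀ k ≤ N / 2,
      |TA k| ≤ 4 * C₃ * Real.exp C₁ * K ^ N * N / (Nat.factorial (2 * k)) * D)
    (hT0 : ∀ k ≤ N / 2, 0 ≤ T k)
    (hT : ∀ k ≤ N / 2,
      T k ≤ 2 * Real.exp C₁ * K ^ N / (Nat.factorial (2 * k)) * D)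
    (hTzero : D ≤ T 0)
    (k₀ : ℕ) (hk₀ : k₀ < N / 2) :
    |(∑ k ∈ range (N / 2 + 1), TA k) / (∑ k ∈ range (N / 2 + 1), T k)
      - (∑ k ∈ range (k₀ + 1), TA k) / (∑ k ∈ range (k₀ + 1), T k)|
      ≤ 16 * C₃ * Real.exp (2 * C₁) * K ^ (2 * N) * N
          * (∑ k ∈ range (k₀ + 1), 1 / (Nat.factorial (2 * k) : ℝ))
          * (∑ k ∈ Icc (k₀ + 1) (N / 2), 1 / (Nat.factorial (2 * k) : ℝ)) := by
  set n := N / 2 with hn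
  have hsplit : ∀ f : ℕ → ℝ, ∑ k ∈ range (n+1), f k
      = ∑ k ∈ range (k₀+1), f k + ∑ k ∈ Icc (k₀+1) n, f k := by
    intro f
    rw [range_eq_Ico, range_eq_Ico, ← Finset.Ico_add_one_right_eq_Icc (k₀+1) n]
    exact (Finset.sum_Ico_consecutive f (Nat.zero_le _) (by omega)).symm
  rw [hsplit TA, hsplit T]
  set A := 4 * C₃ * Real.exp C₁ * K ^ N * (N : ℝ) with hA
  set B := 2 * Real.exp C₁ * K ^ N with hB
  have hKpos : (0:ℝ) < K ^ N := by positivity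
  have hNpos : (0:ℝ) < N := by exact_mod_cast (by omega : 0 < N)
  have hApos : 0 < A := by rw [hA]; positivity
  have hBpos : 0 < B := by rw [hB]; positivity
  set Sh := ∑ k ∈ range (k₀+1), 1 / (Nat.factorial (2 * k) : ℝ) with hSh
  set St := ∑ k ∈ Icc (k₀+1) n, 1 / (Nat.factorial (2 * k) : ℝ) with hSt
  have hShpos : 0 < Sh := by
    rw [hSh]
    apply Finset.sum_pos (fun k _ => by positivity)
    exact ⟨0, by simp⟩
  have hStpos : 0 < St := by
    rw [hSt]
    apply Finset.sum_pos (fun k _ => by positivity)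
    exact ⟨k₀+1, by simp; omega⟩
  set a := ∑ k ∈ range (k₀+1), TA k with ha
  set b := ∑ k ∈ range (k₀+1), T k with hb
  set ra := ∑ k ∈ Icc (k₀+1) n, TA k with hra
  set rb := ∑ k ∈ Icc (k₀+1) n, T k with hrb
  have hbD : D ≤ b := by
    refine le_trans hTzero ?_
    rw [hb]
    apply Finset.single_le_sum (f := T) (fun k hk => hT0 k ?_) (by simp)
    simp only [mem_range] at hk; omega
  have hrb0 : 0 ≤ rb := by
    rw [hrb]
    apply Finset.sum_nonneg (fun k hk => hT0 k ?_)
    simp only [mem_Icc] at hk; omega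
  have hbpos : 0 < b := lt_of_lt_of_le hD hbD
  have hSpos : 0 < b + rb := by linarith
  -- bounds
  have habs : |a| ≤ A * Sh * D := by
    have h1 : |a| ≤ ∑ k ∈ range (k₀+1), |TA k| := by
      rw [ha]; exact Finset.abs_sum_le_sum_abs _ _
    have h2 : ∑ k ∈ range (k₀+1), |TA k|
        ≤ ∑ k ∈ range (k₀+1), A / (Nat.factorial (2 * k) : ℝ) * D :=
      Finset.sum_le_sum fun k hk => hTA k (by simp only [mem_range] at hk; omega)
    have h3 : ∑ k ∈ range (k₀+1), A / (Nat.factorial (2 * k) : ℝ) * D = A * Sh * D := by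
      rw [hSh, Finset.mul_sum, Finset.sum_mul]
      exact Finset.sum_congr rfl fun k _ => by ring
    linarith
  have hrabs : |ra| ≤ A * St * D := by
    have h1 : |ra| ≤ ∑ k ∈ Icc (k₀+1) n, |TA k| := by
      rw [hra]; exact Finset.abs_sum_le_sum_abs _ _
    have h2 : ∑ k ∈ Icc (k₀+1) n, |TA k|
        ≤ ∑ k ∈ Icc (k₀+1) n, A / (Nat.factorial (2 * k) : ℝ) * D :=
      Finset.sum_le_sum fun k hk => hTA k (by simp only [mem_Icc] at hk; omega)
    have h3 : ∑ k ∈ Icc (k₀+1) n, A / (Nat.factorial (2 * k) : ℝ) * D = A * St * D := by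
      rw [hSt, Finset.mul_sum, Finset.sum_mul]
      exact Finset.sum_congr rfl fun k _ => by ring
    linarith
  have hbub : b ≤ B * Sh * D := by
    have h2 : b ≤ ∑ k ∈ range (k₀+1), B / (Nat.factorial (2 * k) : ℝ) * D := by
      rw [hb]
      exact Finset.sum_le_sum fun k hk => hT k (by simp only [mem_range] at hk; omega)
    have h3 : ∑ k ∈ range (k₀+1), B / (Nat.factorial (2 * k) : ℝ) * D = B * Sh * D := by
      rw [hSh, Finset.mul_sum, Finset.sum_mul]
      exact Finset.sum_congr rfl fun k _ => by ring
    linarith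
  have hrbub : rb ≤ B * St * D := by
    have h2 : rb ≤ ∑ k ∈ Icc (k₀+1) n, B / (Nat.factorial (2 * k) : ℝ) * D := by
      rw [hrb]
      exact Finset.sum_le_sum fun k hk => hT k (by simp only [mem_Icc] at hk; omega)
    have h3 : ∑ k ∈ Icc (k₀+1) n, B / (Nat.factorial (2 * k) : ℝ) * D = B * St * D := by
      rw [hSt, Finset.mul_sum, Finset.sum_mul]
      exact Finset.sum_congr rfl fun k _ => by ring
    linarith
  have key : (a + ra) / (b + rb) - a / b = (ra * b - a * rb) / ((b + rb) * b) := by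
    field_simp
    ring
  rw [key, abs_div, abs_of_pos (by positivity : (0:ℝ) < (b + rb) * b)]
  have hnum : |ra * b - a * rb| ≤ 2 * A * B * Sh * St * (D * D) := by
    have h0 : |ra * b - a * rb| ≤ |ra * b| + |a * rb| := abs_sub _ _
    have h0' : |ra * b| + |a * rb| = |ra| * b + |a| * rb := by
      rw [abs_mul, abs_mul, abs_of_pos hbpos, abs_of_nonneg hrb0]
    have h1 : |ra| * b ≤ (A * St * D) * (B * Sh * D) :=
      mul_le_mul hrabs hbub hbpos.le (by positivity)
    have h2 : |a| * rb ≤ (A * Sh * D) * (B * St * D) :=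
      mul_le_mul habs hrbub hrb0 (by positivity)
    have h3 : (A * St * D) * (B * Sh * D) + (A * Sh * D) * (B * St * D)
        = 2 * A * B * Sh * St * (D * D) := by ring
    linarith
  have hden : D * D ≤ (b + rb) * b := by
    have hDS : D ≤ b + rb := by linarith
    exact mul_le_mul hDS hbD hD.le (by linarith)
  have step1 : |ra * b - a * rb| / ((b + rb) * b)
      ≤ (2 * A * B * Sh * St * (D * D)) / (D * D) :=
    div_le_div₀ (by positivity) hnum (by positivity) hden
  have step2 : (2 * A * B * Sh * St * (D * D)) / (D * D) = 2 * A * B * Sh * St := by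
    field_simp
  have step3 : 2 * A * B * Sh * St
      = 16 * C₃ * Real.exp (2 * C₁) * K ^ (2 * N) * N * Sh * St := by
    rw [hA, hB, two_mul C₁, Real.exp_add, two_mul N, pow_add]
    ring
  linarith
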